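/- Let k ≥ 1 and let n be a natural number with n < k. Let a_1 ≤ a_2 ≤ … ≤ a_k be integers with a_1 ≥ 1, and let c_1, …, c_k be real numbers with 0 ≤ c_i < 1 for all i and c_1 + ⋯ + c_k > n. Then c_1 a_1 + ⋯ + c_k a_k > a_1 + ⋯ + a_n (the right-hand side being the empty sum 0 when n = 0). -/

import Mathlib

open Finset

/-- If `a_1 ≤ ⋯ ≤ a_k` are positive integers, `c_i ∈ [0,1)` and
`c_1 + ⋯ + c_k > n` with `n < k`, then `c_1 a_1 + ⋯ + c_k a_k > a_1 + ⋯ + a_n`. -/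
theorem weighted_sum_gt_initial_sum (k n : ℕ) (hk : 1 ≤ k) (hn : n < k)
    (a : Fin k → ℤ) (ha : Monotone a) (hapos : ∀ i, 1 ≤ a i)
    (c : Fin k → ℝ) (hc : ∀ i, 0 ≤ c i ∧ c i < 1)
    (hsum : (n : ℝ) < ∑ i, c i) :
    (∑ i ∈ Finset.univ.filter (fun i : Fin k => (i : ℕ) < n), (a i : ℝ)) <
      ∑ i, c i * (a i : ℝ) := by
  set m : Fin k := ⟨n, hn⟩ with hm
  have hA : (1:ℝ) ≤ (a m : ℝ) := by exact_mod_cast hapos m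
  have key : ∀ i : Fin k, (c i - if (i:ℕ) < n then 1 else 0) * (a m : ℝ)
      ≤ c i * a i - (if (i:ℕ) < n then (a i:ℝ) else 0) := by
    intro i
    by_cases h : (i:ℕ) < n
    · simp only [h, if_true]
      have hle : (a i : ℝ) ≤ a m := by
        exact_mod_cast ha (le_of_lt (show i < m from h))
      nlinarith [(hc i).1, (hc i).2, hA,
        (show (1:ℝ) ≤ (a i:ℝ) from by exact_mod_cast hapos i)]
    · simp only [h, if_false]
      have hle : (a m : ℝ) ≤ a i := by
        exact_mod_cast ha (show m ≤ i from not_lt.1 h)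
      nlinarith [(hc i).1]
  have hsum2 : ∑ i, (c i - if (i:ℕ) < n then 1 else 0) * (a m:ℝ)
      ≤ ∑ i, (c i * a i - if (i:ℕ) < n then (a i:ℝ) else 0) :=
    Finset.sum_le_sum fun i _ => key i
  have hcard : ∑ i : Fin k, (if (i:ℕ) < n then (1:ℝ) else 0) = n := by
    rw [Finset.sum_boole]
    have : Finset.univ.filter (fun i : Fin k => (i:ℕ) < n) = Finset.Iio m := by
      ext i; simp [Fin.lt_def, hm, -Fin.val_fin_lt]
    rw [this, Fin.card_Iio]
  have e1 : ∑ i, (c i - if (i:ℕ) < n then 1 else 0) * (a m:ℝ)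
      = (∑ i, c i) * (a m:ℝ) - (n:ℝ) * (a m:ℝ) := by
    simp only [sub_mul]
    rw [Finset.sum_sub_distrib, ← Finset.sum_mul, ← Finset.sum_mul, hcard]
  have e2 : ∑ i, (c i * (a i:ℝ) - if (i:ℕ) < n then (a i:ℝ) else 0)
      = (∑ i, c i * (a i:ℝ)) - ∑ i ∈ Finset.univ.filter (fun i : Fin k => (i:ℕ) < n), (a i:ℝ) := by
    rw [Finset.sum_sub_distrib, Finset.sum_filter]
  rw [e1, e2] at hsum2
  nlinarith [hsum2, hA, hsum]
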